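/- For the monoid S = ⟨a, b | a² = 1, ab = b⟩, the relation ∼o is a congruence, and the quotient S/∼o is not right-cancellative (since ab = b = 1b but a ≁o 1). -/

import Mathlib

/-- The defining relations `a² = 1` and `ab = b` on the free monoid on two generators. -/
def baRel : FreeMonoid (Fin 2) → FreeMonoid (Fin 2) → Prop := fun x y =>
  (x = FreeMonoid.of 0 * FreeMonoid.of 0 ∧ y = 1) ∨
  (x = FreeMonoid.of 0 * FreeMonoid.of 1 ∧ y = FreeMonoid.of 1)

/-- The monoid `S = ⟨a, b | a² = 1, ab = b⟩`. -/
abbrev BaMonoid := (conGen baRel).Quotient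

/-- Otto conjugacy: `x ∼o y` iff `xg = gy` and `yh = hx` for some `g, h`. -/
def oRel {S : Type*} [Mul S] (x y : S) : Prop :=
  ∃ g h : S, x * g = g * y ∧ y * h = h * x

/-- The concrete model: normal forms `b^n a^ε`. -/
structure MM where
  n : ℕ
  b : Bool
deriving DecidableEq

namespace MM

instance : One MM := ⟨⟨0, false⟩⟩
instance : Mul MM := ⟨fun x y => if y.n = 0 then ⟨x.n, xor x.b y.b⟩ else ⟨x.n + y.n, y.b⟩⟩

theorem mul_def (x y : MM) :
    x * y = if y.n = 0 then ⟨x.n, xor x.b y.b⟩ else ⟨x.n + y.n, y.b⟩ := rfl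

theorem one_def : (1 : MM) = ⟨0, false⟩ := rfl

instance : Monoid MM where
  one_mul x := by
    rcases x with ⟨n, b⟩
    rw [mul_def, one_def]
    by_cases h : n = 0 <;> simp [h]
  mul_one x := by
    rcases x with ⟨n, b⟩
    rw [mul_def, one_def]
    simp
  mul_assoc x y z := by
    rcases x with ⟨i, ε⟩; rcases y with ⟨j, δ⟩; rcases z with ⟨k, γ⟩
    simp only [mul_def]
    by_cases hk : k = 0 <;> by_cases hj : j = 0 <;>
      simp [hk, hj, Bool.xor_assoc, Nat.add_assoc]

theorem oRel_iff (x y : MM) : oRel x y ↔ x = y ∨ (x.n = y.n ∧ x.n ≠ 0) := by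
  constructor
  · rintro ⟨g, h, e1, e2⟩
    rcases x with ⟨i, ε⟩; rcases y with ⟨j, δ⟩; rcases g with ⟨k, γ⟩; rcases h with ⟨l, θ⟩
    simp only [mul_def] at e1 e2
    split_ifs at e1 e2 <;>
      rw [MM.mk.injEq] at e1 e2 <;>
      obtain ⟨e1n, e1b⟩ := e1 <;> obtain ⟨e2n, e2b⟩ := e2 <;>
      cases ε <;> cases δ <;> cases γ <;> cases θ <;>
      simp only [Bool.xor_false, Bool.xor_true, Bool.false_xor, Bool.true_xor,
        Bool.not_true, Bool.not_false, MM.mk.injEq, ne_eq, and_true, true_and,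
        Bool.true_eq_false, Bool.false_eq_true, and_false, false_and, false_or,
        or_false] at e1n e1b e2n e2b ⊢ <;> omega
  · rintro (rfl | ⟨hn, hne⟩)
    · exact ⟨1, 1, by rw [mul_one, one_mul], by rw [mul_one, one_mul]⟩
    · rcases x with ⟨i, ε⟩; rcases y with ⟨j, δ⟩
      simp only at hn hne; subst hn
      cases ε <;> cases δ
      · exact ⟨1, 1, by rw [mul_one, one_mul], by rw [mul_one, one_mul]⟩
      · exact ⟨⟨0, true⟩, ⟨1, false⟩, by simp [mul_def, hne, Nat.add_comm],
          by simp [mul_def, hne, Nat.add_comm]⟩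
      · exact ⟨⟨1, false⟩, ⟨0, true⟩, by simp [mul_def, hne, Nat.add_comm],
          by simp [mul_def, hne, Nat.add_comm]⟩
      · exact ⟨1, 1, by rw [mul_one, one_mul], by rw [mul_one, one_mul]⟩

end MM

/-- The map to the model. -/
def fGen : Fin 2 → MM := ![⟨0, true⟩, ⟨1, false⟩]

theorem key_le : conGen baRel ≤ Con.ker (FreeMonoid.lift fGen) := by
  apply Con.conGen_le.2
  rintro x y (⟨rfl, rfl⟩ | ⟨rfl, rfl⟩) <;>
    simp [Con.ker_rel, fGen, MM.mul_def, MM.one_def]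

def φ : BaMonoid →* MM := (conGen baRel).lift (FreeMonoid.lift fGen) key_le

def A : BaMonoid := (FreeMonoid.of 0 : FreeMonoid (Fin 2))
def B : BaMonoid := (FreeMonoid.of 1 : FreeMonoid (Fin 2))

theorem hAA : A * A = 1 := by
  show ((FreeMonoid.of 0 * FreeMonoid.of 0 : FreeMonoid (Fin 2)) : BaMonoid) = ((1 : FreeMonoid (Fin 2)) : BaMonoid)
  exact Con.eq _ |>.mpr (ConGen.Rel.of _ _ (Or.inl ⟨rfl, rfl⟩))

theorem hAB : A * B = B := by
  show ((FreeMonoid.of 0 * FreeMonoid.of 1 : FreeMonoid (Fin 2)) : BaMonoid) = ((FreeMonoid.of 1 : FreeMonoid (Fin 2)) : BaMonoid)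
  exact Con.eq _ |>.mpr (ConGen.Rel.of _ _ (Or.inr ⟨rfl, rfl⟩))

theorem hABpow (i : ℕ) (hi : i ≠ 0) : A * B ^ i = B ^ i := by
  obtain ⟨j, rfl⟩ := Nat.exists_eq_succ_of_ne_zero hi
  rw [pow_succ', ← mul_assoc, hAB]

/-- Normal form. -/
def nf (i : ℕ) (ε : Bool) : BaMonoid := B ^ i * (cond ε A 1)

theorem surj_nf (s : BaMonoid) : ∃ i ε, s = nf i ε := by
  induction s using Con.induction_on with
  | H w =>
    induction w using FreeMonoid.recOn with
    | one => exact ⟨0, false, by simp [nf]⟩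
    | of_mul x xs ih =>
      obtain ⟨i, ε, hi⟩ := ih
      rw [Con.coe_mul, hi]
      fin_cases x
      · -- generator a
        show ∃ i' ε', A * nf i ε = nf i' ε'
        by_cases h : i = 0
        · subst h
          cases ε
          · exact ⟨0, true, by simp [nf]⟩
          · exact ⟨0, false, by simpa [nf] using hAA⟩
        · refine ⟨i, ε, ?_⟩
          simp only [nf]
          rw [← mul_assoc, hABpow i h]
      · -- generator b
        show ∃ i' ε', B * nf i ε = nf i' ε'
        refine ⟨i + 1, ε, ?_⟩
        simp only [nf]
        rw [← mul_assoc, ← pow_succ']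

theorem φ_A : φ A = ⟨0, true⟩ := rfl
theorem φ_B : φ B = ⟨1, false⟩ := rfl

theorem φ_nf (i : ℕ) (ε : Bool) : φ (nf i ε) = ⟨i, ε⟩ := by
  have hB : φ (B ^ i) = ⟨i, false⟩ := by
    induction i with
    | zero => simp [MM.one_def]
    | succ j ih =>
      rw [pow_succ, map_mul, ih, φ_B, MM.mul_def]
      simp
  cases ε
  · simp [nf, hB]
  · simp only [nf, cond, map_mul, hB, φ_A, MM.mul_def]
    simp

theorem φ_bij : Function.Bijective φ := by
  constructor
  · intro s t hst
    obtain ⟨i, ε, rfl⟩ := surj_nf s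
    obtain ⟨j, δ, rfl⟩ := surj_nf t
    rw [φ_nf, φ_nf] at hst
    injection hst with h1 h2
    subst h1; subst h2; rfl
  · intro m
    rcases m with ⟨i, ε⟩
    exact ⟨nf i ε, φ_nf i ε⟩

noncomputable def e : BaMonoid ≃* MM := MulEquiv.ofBijective φ φ_bij

theorem oRel_map {S T : Type*} [Monoid S] [Monoid T] (f : S →* T) {x y : S}
    (h : oRel x y) : oRel (f x) (f y) := by
  obtain ⟨g, k, h1, h2⟩ := h
  exact ⟨f g, f k, by rw [← map_mul, ← map_mul, h1], by rw [← map_mul, ← map_mul, h2]⟩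

theorem oRel_e_iff (x y : BaMonoid) : oRel x y ↔ oRel (e x) (e y) := by
  constructor
  · exact oRel_map e.toMonoidHom
  · intro h
    have := oRel_map e.symm.toMonoidHom h
    simpa using this

/-- For `S = ⟨a, b | a² = 1, ab = b⟩`, `∼o` is a congruence, and the quotient `S/∼o`
is not right-cancellative: there are `x, y, z` with `xz ∼o yz` but `x ≁o y`. -/
theorem stmt_10 :
    Equivalence (oRel (S := BaMonoid)) ∧
    (∀ a b c d : BaMonoid, oRel a b → oRel c d → oRel (a * c) (b * d)) ∧
    (∃ x y z : BaMonoid, oRel (x * z) (y * z) ∧ ¬ oRel x y) := by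
  refine ⟨⟨?_, ?_, ?_⟩, ?_, ?_⟩
  · intro x
    rw [oRel_e_iff, MM.oRel_iff]
    left; rfl
  · intro x y h
    rw [oRel_e_iff, MM.oRel_iff] at h ⊢
    rcases h with heq | ⟨h1, h2⟩
    · exact Or.inl heq.symm
    · exact Or.inr ⟨h1.symm, h1 ▸ h2⟩
  · intro x y z h1 h2
    rw [oRel_e_iff, MM.oRel_iff] at h1 h2 ⊢
    rcases h1 with heq1 | ⟨h1, h1'⟩ <;> rcases h2 with heq2 | ⟨h2, h2'⟩
    · exact Or.inl (heq1.trans heq2)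
    · rw [heq1]; exact Or.inr ⟨h2, h2'⟩
    · rw [← heq2]; exact Or.inr ⟨h1, h1'⟩
    · exact Or.inr ⟨h1.trans h2, h1'⟩
  · intro a b c d h1 h2
    rw [oRel_e_iff, MM.oRel_iff] at h1 h2 ⊢
    rw [map_mul, map_mul, MM.mul_def, MM.mul_def]
    rcases h1 with h1 | ⟨h1, h1'⟩ <;> rcases h2 with h2 | ⟨h2, h2'⟩ <;>
      rw [h1, h2] <;> try (left; rfl)
    all_goals (split_ifs <;> simp_all <;> omega)
  · refine ⟨A, 1, B, ?_, ?_⟩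
    · rw [hAB, one_mul]
      rw [oRel_e_iff, MM.oRel_iff]; left; rfl
    · rw [oRel_e_iff, MM.oRel_iff]
      simp only [map_one, MM.one_def]
      have : e A = φ A := rfl
      rw [this, φ_A]
      simp
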